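/- Let ρ > 0 and let (Φ(n))_{n≥1} be a sequence of positive real numbers with Φ(1) = ρ, such that every entry Φ(n:1) = ρ·n and Φ(n:m) = −C(n,m)·∇^{m−2}Ψ(n−m+1), 2 ≤ m ≤ n, is nonnegative, where Ψ(n) = (Φ̄(n) − Φ̄(n+1))/n and Φ̄(n) = Φ(n) − ρ·n. Then the triangular array q(n:m) = Φ(n:m)/Φ(n), 1 ≤ m ≤ n, is an infinite decrement matrix satisfying the consistency recursion for all b ≥ 1. -/
import Mathlib


open Finset MeasureTheory

/-- A composition of a positive integer: a nonempty list of positive parts. -/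
def IsComposition (c : List ℕ) : Prop := c ≠ [] ∧ ∀ x ∈ c, 0 < x

/-- An infinite decrement matrix: nonnegative triangular array with rows summing to 1. -/
def IsDecrementMatrix (q : ℕ → ℕ → ℝ) : Prop :=
  (∀ b k, 1 ≤ k → k ≤ b → 0 ≤ q b k) ∧
  ∀ b, 1 ≤ b → ∑ k ∈ Finset.Icc 1 b, q b k = 1

/-- Right-hand side of Möhle's recursion for `p` at the composition `c`, with coefficients
from the decrement matrix `q`. -/
noncomputable def mohleRHS (q : ℕ → ℕ → ℝ) (p : List ℕ → ℝ) (c : List ℕ) : ℝ :=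
  q c.sum 1 / (c.sum : ℝ) *
      ∑ j ∈ Finset.range c.length, (if c.getD j 0 = 1 then p (c.eraseIdx j) else 0) +
    ∑ k ∈ Finset.Icc 2 c.sum, q c.sum k *
      ∑ j ∈ Finset.range c.length,
        (if k ≤ c.getD j 0 then
            ((c.getD j 0).choose k : ℝ) / (c.sum.choose k : ℝ) * p (c.set j (c.getD j 0 - k + 1))
          else 0)

/-- Möhle's recursion holds for `p` at the composition `c`. -/
def MohleRec (q : ℕ → ℕ → ℝ) (p : List ℕ → ℝ) (c : List ℕ) : Prop := p c = mohleRHS q p c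

/-- The (backward) consistency recursion for a decrement matrix, at level `b`. -/
def ConsistencyRec (q : ℕ → ℕ → ℝ) (b : ℕ) : Prop :=
  (∀ k, 2 ≤ k → k ≤ b →
    q b k = ((k : ℝ) + 1) / ((b : ℝ) + 1) * q (b + 1) (k + 1)
      + ((b : ℝ) + 1 - (k : ℝ)) / ((b : ℝ) + 1) * q (b + 1) k
      + 1 / ((b : ℝ) + 1) * q (b + 1) 1 * q b k
      + 2 / ((b : ℝ) + 1) * q (b + 1) 2 * q b k) ∧
  q b 1 = (b : ℝ) / ((b : ℝ) + 1) * q (b + 1) 1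
    + 1 / ((b : ℝ) + 1) * q (b + 1) 1 * q b 1
    + 2 / ((b : ℝ) + 1) * q (b + 1) 2 * q b 1

/-- A finite EPPF on compositions of `m ≤ n`: nonnegative, symmetric, normalized,
satisfying the addition rule below level `n` (with the convention `p(∅) = 1`). -/
def IsFiniteEPPF (n : ℕ) (p : List ℕ → ℝ) : Prop :=
  p [] = 1 ∧ p [1] = 1 ∧
  (∀ c, IsComposition c → c.sum ≤ n → 0 ≤ p c) ∧
  (∀ c c', IsComposition c → c.sum ≤ n → List.Perm c c' → p c = p c') ∧
  ∀ c, IsComposition c → c.sum < n →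
    p c = p (c ++ [1]) + ∑ i ∈ Finset.range c.length, p (c.set i (c.getD i 0 + 1))

/-- An infinite EPPF: nonnegative, symmetric, normalized, satisfying the addition rule. -/
def IsInfEPPF (p : List ℕ → ℝ) : Prop :=
  p [1] = 1 ∧
  (∀ c, IsComposition c → 0 ≤ p c) ∧
  (∀ c c', IsComposition c → List.Perm c c' → p c = p c') ∧
  ∀ c, IsComposition c →
    p c = p (c ++ [1]) + ∑ i ∈ Finset.range c.length, p (c.set i (c.getD i 0 + 1))

/-- `Φ(b:k)` for the `(Λ, ρ)`-coalescent with freeze. -/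
noncomputable def coalPhiK (Λ : Measure (Set.Icc (0:ℝ) 1)) (ρ : ℝ) (b k : ℕ) : ℝ :=
  if k = 1 then ρ * b
  else (b.choose k : ℝ) * ∫ x, (x : ℝ) ^ (k - 2) * (1 - (x : ℝ)) ^ (b - k) ∂Λ

/-- `Φ(b) = ∑_{k=1}^b Φ(b:k)`, the total rate. -/
noncomputable def coalPhi (Λ : Measure (Set.Icc (0:ℝ) 1)) (ρ : ℝ) (b : ℕ) : ℝ :=
  ∑ k ∈ Finset.Icc 1 b, coalPhiK Λ ρ b k

/-- Iterated backward difference `∇^j c (n) = ∑_{i=0}^j (-1)^i C(j,i) c(n+i)`. -/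
def nablaIter (c : ℕ → ℝ) (j n : ℕ) : ℝ :=
  ∑ i ∈ Finset.range (j + 1), (-1 : ℝ) ^ i * (j.choose i : ℝ) * c (n + i)

/-- `Φ̄(n) = Φ(n) - ρ n`. -/
noncomputable def phiBar (Φ : ℕ → ℝ) (ρ : ℝ) (n : ℕ) : ℝ := Φ n - ρ * n

/-- `Ψ(n) = ∇Φ̄(n) / n`. -/
noncomputable def psiOf (Φ : ℕ → ℝ) (ρ : ℝ) (n : ℕ) : ℝ :=
  (phiBar Φ ρ n - phiBar Φ ρ (n + 1)) / n

/-- `Φ(n:1) = ρ n` and `Φ(n:m) = -C(n,m) ∇^{m-2} Ψ (n-m+1)` for `m ≥ 2`. -/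
noncomputable def phiNM (Φ : ℕ → ℝ) (ρ : ℝ) (n m : ℕ) : ℝ :=
  if m = 1 then ρ * n
  else -(n.choose m : ℝ) * nablaIter (psiOf Φ ρ) (m - 2) (n - m + 1)


section Aux
variable (Φ : ℕ → ℝ) (ρ : ℝ)

lemma nabla_step (c : ℕ → ℝ) (j n : ℕ) :
    nablaIter c (j + 1) n = nablaIter c j n - nablaIter c j (n + 1) := by
  unfold nablaIter
  rw [Finset.sum_range_succ' (fun i => (-1:ℝ)^i * ((j+1).choose i : ℝ) * c (n + i)) (j+1)]
  have h1 : ∀ i : ℕ, ((j+1).choose (i+1) : ℝ) = (j.choose i : ℝ) + (j.choose (i+1) : ℝ) := by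
    intro i; exact_mod_cast congrArg Nat.cast (Nat.choose_succ_succ j i)
  have key : ∑ i ∈ Finset.range (j+1), (-1:ℝ)^(i+1) * ((j+1).choose (i+1) : ℝ) * c (n + (i+1))
      = (∑ i ∈ Finset.range (j+1), (-1:ℝ)^(i+1) * (j.choose (i+1) : ℝ) * c (n + (i+1)))
        - ∑ i ∈ Finset.range (j+1), (-1:ℝ)^i * (j.choose i : ℝ) * c (n + 1 + i) := by
    rw [← Finset.sum_sub_distrib]
    refine Finset.sum_congr rfl fun i _ => ?_
    have hn : n + 1 + i = n + (i + 1) := by ring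
    rw [hn, h1 i]; ring
  rw [key]
  have h2 : ∑ i ∈ Finset.range (j+1), (-1:ℝ)^(i+1) * (j.choose (i+1) : ℝ) * c (n + (i+1))
      = ∑ i ∈ Finset.range (j+1+1), (-1:ℝ)^i * (j.choose i : ℝ) * c (n + i)
        - (-1:ℝ)^0 * (j.choose 0 : ℝ) * c (n + 0) := by
    rw [Finset.sum_range_succ' (fun i => (-1:ℝ)^i * (j.choose i : ℝ) * c (n + i)) (j+1)]
    ring
  rw [h2, Finset.sum_range_succ]
  simp [Nat.choose_succ_self]
  ring

lemma phiNM_two_le {n m : ℕ} (h2 : 2 ≤ m) :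
    phiNM Φ ρ n m = -(n.choose m : ℝ) * nablaIter (psiOf Φ ρ) (m - 2) (n - m + 1) := by
  rw [phiNM, if_neg (by omega)]

lemma phiNM_one (n : ℕ) : phiNM Φ ρ n 1 = ρ * n := by simp [phiNM]

lemma lemA {b k : ℕ} (h2 : 2 ≤ k) (hkb : k ≤ b) :
    ((k:ℝ)+1) * phiNM Φ ρ (b+1) (k+1) + ((b:ℝ)+1-(k:ℝ)) * phiNM Φ ρ (b+1) k
      = ((b:ℝ)+1) * phiNM Φ ρ b k := by
  rw [phiNM_two_le Φ ρ (by omega : 2 ≤ k+1), phiNM_two_le Φ ρ h2, phiNM_two_le Φ ρ h2]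
  have e1 : b + 1 - (k+1) + 1 = b - k + 1 := by omega
  have e2 : k + 1 - 2 = (k - 2) + 1 := by omega
  have e3 : b + 1 - k + 1 = (b - k + 1) + 1 := by omega
  rw [e1, e2, e3, nabla_step]
  have h1 : ((k:ℝ)+1) * ((b+1).choose (k+1) : ℝ) = ((b:ℝ)+1) * (b.choose k : ℝ) := by
    have := Nat.add_one_mul_choose_eq b k
    have : ((b+1) * b.choose k : ℕ) = ((b+1).choose (k+1) * (k+1) : ℕ) := this
    have hc : ((b:ℝ)+1) * (b.choose k : ℝ) = ((b+1).choose (k+1) : ℝ) * ((k:ℝ)+1) := by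
      exact_mod_cast congrArg (Nat.cast : ℕ → ℝ) this
    linarith [hc]
  have h2' : ((b:ℝ)+1-(k:ℝ)) * ((b+1).choose k : ℝ) = ((b:ℝ)+1) * (b.choose k : ℝ) := by
    have hnat := Nat.choose_mul_succ_eq b k
    have hc : ((b.choose k : ℝ)) * ((b:ℝ)+1) = ((b+1).choose k : ℝ) * (((b + 1 - k : ℕ)) : ℝ) := by
      exact_mod_cast congrArg (Nat.cast : ℕ → ℝ) hnat
    have hk : (((b + 1 - k : ℕ)) : ℝ) = (b:ℝ)+1-(k:ℝ) := by
      have hkb1 : k ≤ b + 1 := by omega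
      push_cast [hkb1]; ring
    rw [hk] at hc
    linarith [hc]
  set X := nablaIter (psiOf Φ ρ) (k-2) (b-k+1)
  set Y := nablaIter (psiOf Φ ρ) (k-2) (b-k+1+1)
  linear_combination (Y - X) * h1 - Y * h2'

lemma lemTwo {b : ℕ} (hb : 1 ≤ b) :
    2 * phiNM Φ ρ (b+1) 2 = ((b:ℝ)+1) * (phiBar Φ ρ (b+1) - phiBar Φ ρ b) := by
  rw [phiNM_two_le Φ ρ (le_refl 2)]
  have e1 : b + 1 - 2 + 1 = b := by omega
  rw [e1]
  have hn : nablaIter (psiOf Φ ρ) 0 b = psiOf Φ ρ b := by simp [nablaIter]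
  have hc : (((b+1).choose 2 : ℕ) : ℝ) = ((b:ℝ)+1) * b / 2 := by
    have hdvd : 2 ∣ (b+1) * b := by
      rw [Nat.mul_comm]; exact (Nat.even_mul_succ_self b).two_dvd
    rw [Nat.choose_two_right, Nat.succ_sub_one, Nat.cast_div hdvd (by norm_num)]
    push_cast; ring
  rw [hn, hc, psiOf]
  have hb0 : (b:ℝ) ≠ 0 := by positivity
  field_simp
  ring

lemma lemB {b : ℕ} (hb : 1 ≤ b) :
    ((b:ℝ)+1) * Φ (b+1) - phiNM Φ ρ (b+1) 1 - 2 * phiNM Φ ρ (b+1) 2 = ((b:ℝ)+1) * Φ b := by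
  rw [phiNM_one, lemTwo Φ ρ hb]
  simp only [phiBar]
  push_cast
  ring

lemma icc_bot {a b : ℕ} (h : a ≤ b) (f : ℕ → ℝ) :
    ∑ k ∈ Finset.Icc a b, f k = f a + ∑ k ∈ Finset.Icc (a+1) b, f k := by
  have he : Finset.Icc a b = insert a (Finset.Icc (a+1) b) := by
    ext x; simp only [Finset.mem_Icc, Finset.mem_insert]; omega
  rw [he, Finset.sum_insert (by simp)]

lemma icc_shift (a b : ℕ) (f : ℕ → ℝ) :
    ∑ k ∈ Finset.Icc a b, f (k+1) = ∑ k ∈ Finset.Icc (a+1) (b+1), f k := by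
  rw [← Finset.map_add_right_Icc a b 1, Finset.sum_map]
  rfl

lemma rowsum (hΦ1 : Φ 1 = ρ) :
    ∀ n, 1 ≤ n → ∑ m ∈ Finset.Icc 1 n, phiNM Φ ρ n m = Φ n := by
  intro n hn
  induction n with
  | zero => omega
  | succ b ih =>
    rcases Nat.eq_or_lt_of_le hn with h1 | h1
    · simp [← h1, phiNM_one, hΦ1]
    · have hb : 1 ≤ b := by omega
      have hS : ∑ m ∈ Finset.Icc 1 b, phiNM Φ ρ b m = Φ b := ih hb
      have hS2 : ∑ m ∈ Finset.Icc 2 b, phiNM Φ ρ b m = Φ b - ρ * b := by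
        rw [icc_bot hb (fun m => phiNM Φ ρ b m), phiNM_one] at hS
        linarith [hS]
      have hsum : ∑ k ∈ Finset.Icc 2 b, (((k:ℝ)+1) * phiNM Φ ρ (b+1) (k+1)
            + ((b:ℝ)+1-(k:ℝ)) * phiNM Φ ρ (b+1) k)
          = ((b:ℝ)+1) * (Φ b - ρ * b) := by
        have hcong : ∑ k ∈ Finset.Icc 2 b, (((k:ℝ)+1) * phiNM Φ ρ (b+1) (k+1)
              + ((b:ℝ)+1-(k:ℝ)) * phiNM Φ ρ (b+1) k)
            = ∑ k ∈ Finset.Icc 2 b, ((b:ℝ)+1) * phiNM Φ ρ b k :=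
          Finset.sum_congr rfl fun k hk =>
            lemA Φ ρ (Finset.mem_Icc.mp hk).1 (Finset.mem_Icc.mp hk).2
        rw [hcong, ← Finset.mul_sum, hS2]
      have split : ∑ k ∈ Finset.Icc 2 b, (((k:ℝ)+1) * phiNM Φ ρ (b+1) (k+1)
            + ((b:ℝ)+1-(k:ℝ)) * phiNM Φ ρ (b+1) k)
          = ((b:ℝ)+1) * (∑ k ∈ Finset.Icc 2 (b+1), phiNM Φ ρ (b+1) k)
            - 2 * phiNM Φ ρ (b+1) 2 := by
        rw [Finset.sum_add_distrib]
        have e1 : ∑ k ∈ Finset.Icc 2 b, ((k:ℝ)+1) * phiNM Φ ρ (b+1) (k+1)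
            = ∑ k ∈ Finset.Icc 3 (b+1), (k:ℝ) * phiNM Φ ρ (b+1) k := by
          rw [← icc_shift 2 b (fun k => (k:ℝ) * phiNM Φ ρ (b+1) k)]
          refine Finset.sum_congr rfl fun k _ => ?_
          push_cast; ring
        have e2 : ∑ k ∈ Finset.Icc 3 (b+1), (k:ℝ) * phiNM Φ ρ (b+1) k
            = ∑ k ∈ Finset.Icc 2 (b+1), (k:ℝ) * phiNM Φ ρ (b+1) k
              - 2 * phiNM Φ ρ (b+1) 2 := by
          rw [icc_bot (by omega : 2 ≤ b + 1) (fun k => (k:ℝ) * phiNM Φ ρ (b+1) k)]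
          push_cast; ring
        have e3 : ∑ k ∈ Finset.Icc 2 b, ((b:ℝ)+1-(k:ℝ)) * phiNM Φ ρ (b+1) k
            = ∑ k ∈ Finset.Icc 2 (b+1), ((b:ℝ)+1-(k:ℝ)) * phiNM Φ ρ (b+1) k := by
          rw [Finset.sum_Icc_succ_top (by omega : 2 ≤ b + 1)
            (fun k => ((b:ℝ)+1-(k:ℝ)) * phiNM Φ ρ (b+1) k)]
          push_cast; ring
        rw [e1, e2, e3, Finset.mul_sum]
        have e4 : ∑ k ∈ Finset.Icc 2 (b+1), (k:ℝ) * phiNM Φ ρ (b+1) k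
              + ∑ k ∈ Finset.Icc 2 (b+1), ((b:ℝ)+1-(k:ℝ)) * phiNM Φ ρ (b+1) k
            = ∑ k ∈ Finset.Icc 2 (b+1), ((b:ℝ)+1) * phiNM Φ ρ (b+1) k := by
          rw [← Finset.sum_add_distrib]
          exact Finset.sum_congr rfl fun k _ => by ring
        linarith [e4]
      have hT : ((b:ℝ)+1) * (∑ k ∈ Finset.Icc 2 (b+1), phiNM Φ ρ (b+1) k)
          = ((b:ℝ)+1) * (Φ (b+1) - ρ * ((b:ℝ)+1)) := by
        have h2 := lemTwo Φ ρ hb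
        simp only [phiBar] at h2
        push_cast at h2 ⊢
        linarith [hsum, split, h2]
      have hb1 : ((b:ℝ)+1) ≠ 0 := by positivity
      have hT' : ∑ k ∈ Finset.Icc 2 (b+1), phiNM Φ ρ (b+1) k
          = Φ (b+1) - ρ * ((b:ℝ)+1) := mul_left_cancel₀ hb1 hT
      rw [icc_bot (by omega : 1 ≤ b + 1) (fun m => phiNM Φ ρ (b+1) m)]
      simp only [phiNM_one]
      rw [hT']
      push_cast; ring

end Aux

/-- If `ρ > 0` and `(Φ(n))` is a positive sequence with `Φ(1) = ρ` whose
derived entries `Φ(n:m)` are all nonnegative, then `q(n:m) = Φ(n:m)/Φ(n)` is an infinite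
decrement matrix satisfying the consistency recursion for all `b ≥ 1`. -/
theorem positivity_gives_consistent_decrement_matrix (ρ : ℝ) (hρ : 0 < ρ) (Φ : ℕ → ℝ)
    (hΦpos : ∀ n, 1 ≤ n → 0 < Φ n) (hΦ1 : Φ 1 = ρ)
    (hnn : ∀ n m, 1 ≤ m → m ≤ n → 0 ≤ phiNM Φ ρ n m) :
    IsDecrementMatrix (fun n m => phiNM Φ ρ n m / Φ n) ∧
    ∀ b, 1 ≤ b → ConsistencyRec (fun n m => phiNM Φ ρ n m / Φ n) b := by
  have hΦne : ∀ n, 1 ≤ n → Φ n ≠ 0 := fun n hn => (hΦpos n hn).ne'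
  constructor
  · constructor
    · intro b k hk hkb
      exact div_nonneg (hnn b k hk hkb) (hΦpos b (le_trans hk hkb)).le
    · intro b hb
      rw [← Finset.sum_div, rowsum Φ ρ hΦ1 b hb, div_self (hΦne b hb)]
  · intro b hb
    have hA : Φ b ≠ 0 := hΦne b hb
    have hB : Φ (b+1) ≠ 0 := hΦne (b+1) (by omega)
    have hb1 : ((b:ℝ)+1) ≠ 0 := by positivity
    have hBfact := lemB Φ ρ hb
    have hden : Φ b * (((b:ℝ)+1) * Φ (b+1)) ≠ 0 :=
      mul_ne_zero hA (mul_ne_zero hb1 hB)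
    constructor
    · intro k h2 hkb
      have hAfact := lemA Φ ρ h2 hkb
      have hclear : (((b:ℝ)+1) * Φ (b+1)) * phiNM Φ ρ b k
          = Φ b * (((k:ℝ)+1) * phiNM Φ ρ (b+1) (k+1) + ((b:ℝ)+1-(k:ℝ)) * phiNM Φ ρ (b+1) k)
            + (phiNM Φ ρ (b+1) 1 + 2 * phiNM Φ ρ (b+1) 2) * phiNM Φ ρ b k := by
        linear_combination (-(Φ b)) * hAfact + phiNM Φ ρ b k * hBfact
      show phiNM Φ ρ b k / Φ b
          = ((k:ℝ)+1)/((b:ℝ)+1) * (phiNM Φ ρ (b+1) (k+1) / Φ (b+1))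
            + ((b:ℝ)+1-(k:ℝ))/((b:ℝ)+1) * (phiNM Φ ρ (b+1) k / Φ (b+1))
            + 1/((b:ℝ)+1) * (phiNM Φ ρ (b+1) 1 / Φ (b+1)) * (phiNM Φ ρ b k / Φ b)
            + 2/((b:ℝ)+1) * (phiNM Φ ρ (b+1) 2 / Φ (b+1)) * (phiNM Φ ρ b k / Φ b)
      have hrhs : ((k:ℝ)+1)/((b:ℝ)+1) * (phiNM Φ ρ (b+1) (k+1) / Φ (b+1))
            + ((b:ℝ)+1-(k:ℝ))/((b:ℝ)+1) * (phiNM Φ ρ (b+1) k / Φ (b+1))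
            + 1/((b:ℝ)+1) * (phiNM Φ ρ (b+1) 1 / Φ (b+1)) * (phiNM Φ ρ b k / Φ b)
            + 2/((b:ℝ)+1) * (phiNM Φ ρ (b+1) 2 / Φ (b+1)) * (phiNM Φ ρ b k / Φ b)
          = (Φ b * (((k:ℝ)+1) * phiNM Φ ρ (b+1) (k+1) + ((b:ℝ)+1-(k:ℝ)) * phiNM Φ ρ (b+1) k)
              + (phiNM Φ ρ (b+1) 1 + 2 * phiNM Φ ρ (b+1) 2) * phiNM Φ ρ b k)
            / ((((b:ℝ)+1) * Φ (b+1)) * Φ b) := by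
        field_simp
        ring
      rw [hrhs, ← hclear, mul_div_mul_left _ _ (mul_ne_zero hb1 hB)]
    · have hQ1 : phiNM Φ ρ (b+1) 1 = ρ * ((b:ℝ)+1) := by
        rw [phiNM_one]; push_cast; ring
      have hclear1 : (((b:ℝ)+1) * Φ (b+1)) * phiNM Φ ρ b 1
          = Φ b * ((b:ℝ) * phiNM Φ ρ (b+1) 1)
            + (phiNM Φ ρ (b+1) 1 + 2 * phiNM Φ ρ (b+1) 2) * phiNM Φ ρ b 1 := by
        rw [phiNM_one Φ ρ b]
        linear_combination (ρ*(b:ℝ)) * hBfact - ((b:ℝ) * Φ b) * hQ1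
      show phiNM Φ ρ b 1 / Φ b
          = (b:ℝ)/((b:ℝ)+1) * (phiNM Φ ρ (b+1) 1 / Φ (b+1))
            + 1/((b:ℝ)+1) * (phiNM Φ ρ (b+1) 1 / Φ (b+1)) * (phiNM Φ ρ b 1 / Φ b)
            + 2/((b:ℝ)+1) * (phiNM Φ ρ (b+1) 2 / Φ (b+1)) * (phiNM Φ ρ b 1 / Φ b)
      have hrhs : (b:ℝ)/((b:ℝ)+1) * (phiNM Φ ρ (b+1) 1 / Φ (b+1))
            + 1/((b:ℝ)+1) * (phiNM Φ ρ (b+1) 1 / Φ (b+1)) * (phiNM Φ ρ b 1 / Φ b)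
            + 2/((b:ℝ)+1) * (phiNM Φ ρ (b+1) 2 / Φ (b+1)) * (phiNM Φ ρ b 1 / Φ b)
          = (Φ b * ((b:ℝ) * phiNM Φ ρ (b+1) 1)
              + (phiNM Φ ρ (b+1) 1 + 2 * phiNM Φ ρ (b+1) 2) * phiNM Φ ρ b 1)
            / ((((b:ℝ)+1) * Φ (b+1)) * Φ b) := by
        field_simp
        ring
      rw [hrhs, ← hclear1, mul_div_mul_left _ _ (mul_ne_zero hb1 hB)]
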